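/- arXiv:math/0610541 — 2 statements merged into one kernel-verified Lean document; each statement's English description precedes it below -/
import Mathlib

section
/- A countable abelian group has asymptotic dimension 0 if and only if it is a torsion group. -/
noncomputable def wordDist {G : Type*} [Group G] (S : Set G) (x y : G) : ℕ :=
  sInf {n | ∃ w : List G, (∀ g ∈ w, g ∈ S ∪ S⁻¹) ∧ w.prod = x⁻¹ * y ∧ w.length = n}

/-- Asymptotic dimension `0` for the word metric of a generating set `S`. -/
def AsdimZero {G : Type*} [Group G] (S : Set G) : Prop :=
  ∀ d : ℕ, 0 < d → ∃ (ι : Type) (B : ι → Set G) (D : ℕ),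
    (∀ x : G, ∃ i, x ∈ B i) ∧
    (∀ i, ∀ x ∈ B i, ∀ y ∈ B i, wordDist S x y ≤ D) ∧
    (∀ i j, i ≠ j → ∀ x ∈ B i, ∀ y ∈ B j, d ≤ wordDist S x y)

/-- Words in `{a, a⁻¹}` multiply to a power of `a` with exponent bounded by length. -/
lemma word_prod_pow {H : Type*} [Group H] (a : H) :
    ∀ w : List H, (∀ x ∈ w, x ∈ ({a} : Set H) ∪ ({a} : Set H)⁻¹) →
      ∃ k : ℤ, w.prod = a ^ k ∧ k.natAbs ≤ w.length := by
  intro w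
  induction w with
  | nil => intro _; exact ⟨0, by simp⟩
  | cons x t ih =>
    intro hw
    obtain ⟨k, hk, hle⟩ := ih (fun y hy => hw y (List.mem_cons_of_mem _ hy))
    have hx := hw x List.mem_cons_self
    simp only [Set.mem_union, Set.mem_singleton_iff, Set.mem_inv] at hx
    rcases hx with hx | hx
    · refine ⟨1 + k, by simp [hx, hk, zpow_add], ?_⟩
      calc (1 + k).natAbs ≤ (1 : ℤ).natAbs + k.natAbs := Int.natAbs_add_le 1 k
        _ ≤ 1 + t.length := by simpa using hle
        _ = (x :: t).length := by simp [add_comm]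
    · have hx' : x = a⁻¹ := by rw [← hx]; simp
      refine ⟨-1 + k, by simp [hx', hk, zpow_add], ?_⟩
      calc (-1 + k).natAbs ≤ (-1 : ℤ).natAbs + k.natAbs := Int.natAbs_add_le (-1) k
        _ ≤ 1 + t.length := by simpa using hle
        _ = (x :: t).length := by simp [add_comm]

/-- A countable abelian group has asymptotic dimension `0` (i.e. every finitely
generated subgroup has asymptotic dimension `0` in its word metric) if and only
if it is a torsion group. -/
theorem countable_abelian_asdim_zero_iff_torsion
    (G : Type*) [CommGroup G] [Countable G] :
    (∀ F : Subgroup G, F.FG → ∀ T : Set F, T.Finite →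
        Subgroup.closure T = ⊤ → AsdimZero T) ↔ Monoid.IsTorsion G := by
  constructor
  · intro h
    by_contra htor
    unfold Monoid.IsTorsion at htor
    unfold IsMulTorsion at htor
    push_neg at htor
    obtain ⟨g, hg⟩ := htor
    set F : Subgroup G := Subgroup.zpowers g with hF
    have hFG : F.FG := ⟨{g}, by simp [hF, Subgroup.zpowers_eq_closure]⟩
    set a : F := ⟨g, Subgroup.mem_zpowers g⟩ with haa
    have ha : ¬ IsOfFinOrder a := by
      intro hfin
      exact hg (by simpa using F.subtype.isOfFinOrder hfin)
    have hinj : Function.Injective fun n : ℤ => a ^ n :=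
      injective_zpow_iff_not_isOfFinOrder.mpr ha
    have hT : Subgroup.closure ({a} : Set F) = ⊤ := by
      rw [Subgroup.eq_top_iff']
      intro x
      obtain ⟨k, hk⟩ := Subgroup.mem_zpowers_iff.mp x.2
      rw [Subgroup.mem_closure_singleton]
      exact ⟨k, Subtype.ext (by rw [← hk]; simp [haa])⟩
    -- lower bound on distances
    have hlow : ∀ n : ℕ, n ≤ wordDist ({a} : Set F) 1 (a ^ n) := by
      intro n
      have hne : {m | ∃ w : List F, (∀ x ∈ w, x ∈ ({a} : Set F) ∪ ({a} : Set F)⁻¹) ∧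
          w.prod = (1 : F)⁻¹ * a ^ n ∧ w.length = m}.Nonempty := by
        refine ⟨n, List.replicate n a, ?_, by simp, by simp⟩
        intro x hx
        rw [List.eq_of_mem_replicate hx]
        exact Or.inl rfl
      refine le_csInf hne ?_
      rintro m ⟨w, hw, hprod, hlen⟩
      obtain ⟨k, hk, hkle⟩ := word_prod_pow a w hw
      have : a ^ k = a ^ (n : ℤ) := by
        rw [← hk, hprod]; simp
      have hkn : k = (n : ℤ) := hinj this
      rw [← hlen]
      calc n = k.natAbs := by simp [hkn]
        _ ≤ w.length := hkle
    -- upper bound on consecutive distances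
    have hstep : ∀ n : ℕ, wordDist ({a} : Set F) (a ^ n) (a ^ (n + 1)) ≤ 1 := by
      intro n
      apply Nat.sInf_le
      refine ⟨[a], ?_, ?_, rfl⟩
      · intro x hx
        simp only [List.mem_singleton] at hx
        exact Or.inl hx
      · simp [pow_succ]
    obtain ⟨ι, B, D, hcov, hdiam, hsep⟩ := h F hFG {a} (Set.finite_singleton a) hT 2 (by norm_num)
    choose f hf using hcov
    have hsame : ∀ n : ℕ, f (a ^ n) = f (a ^ 0) := by
      intro n
      induction n with
      | zero => rfl
      | succ m ih =>
        rw [← ih]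
        by_contra hne
        have := hsep _ _ (Ne.symm hne) _ (hf (a ^ m)) _ (hf (a ^ (m + 1)))
        have h1 := hstep m
        omega
    have h0 : a ^ 0 ∈ B (f (a ^ 0)) := hf (a ^ 0)
    have hD : a ^ (D + 1) ∈ B (f (a ^ 0)) := by rw [← hsame (D + 1)]; exact hf _
    have hle := hdiam _ _ h0 _ hD
    rw [pow_zero] at hle
    have := hlow (D + 1)
    omega
  · intro htor F hFG T hTfin hTtop d hd
    haveI : Group.FG F := (Group.fg_iff_subgroup_fg F).mpr hFG
    haveI : Finite F := CommGroup.finite_of_fg_torsion F (IsTorsion.subgroup htor F)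
    haveI : Fintype F := Fintype.ofFinite F
    refine ⟨Unit, fun _ => Set.univ, Finset.univ.sup (fun p : F × F => wordDist T p.1 p.2),
      fun x => ⟨(), trivial⟩, ?_, ?_⟩
    · intro _ x _ y _
      exact Finset.le_sup (f := fun p : F × F => wordDist T p.1 p.2) (Finset.mem_univ (x, y))
    · intro i j hij
      exact absurd rfl hij
end

section
/- The restricted wreath product G = (ℤ/2ℤ) ≀ ℤ (the lamplighter group) has asymptotic dimension exactly 1. -/
/-- `G` has asymptotic dimension at most `n`: uniformly bounded covers of
`d`-multiplicity at most `n + 1` for every `d > 0`. -/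
def AsdimLE {G : Type*} [Group G] (S : Set G) (n : ℕ) : Prop :=
  ∀ d : ℕ, 0 < d → ∃ (ι : Type) (B : ι → Set G) (D : ℕ),
    (∀ x : G, ∃ i, x ∈ B i) ∧
    (∀ i, ∀ x ∈ B i, ∀ y ∈ B i, wordDist S x y ≤ D) ∧
    (∀ x : G, ∃ t : Finset ι, t.card ≤ n + 1 ∧
      ∀ i, (∃ y ∈ B i, wordDist S x y ≤ d) → i ∈ t)

/-- The base group `⊕_ℤ ℤ/2ℤ`, written multiplicatively. -/
abbrev Base : Type := Multiplicative (ℤ →₀ ZMod 2)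

/-- The shift action of `ℤ` on `⊕_ℤ ℤ/2ℤ`, translating coordinates. -/
noncomputable def shiftAction : Multiplicative ℤ →* MulAut Base where
  toFun n := AddEquiv.toMultiplicative (Finsupp.domCongr (Equiv.addRight n.toAdd))
  map_one' := by
    ext f a
    simp [AddEquiv.toMultiplicative, Finsupp.domCongr]
    rfl
  map_mul' m n := by
    ext f a
    rw [MulAut.mul_apply]
    simp [AddEquiv.toMultiplicative, Finsupp.domCongr, Finsupp.equivMapDomain_apply]
    congr 1
    simp [Equiv.Perm.mul_def]
    ring

/-- The lamplighter group `(ℤ/2ℤ) ≀ ℤ = (⊕_ℤ ℤ/2ℤ) ⋊ ℤ`. -/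
abbrev Lamplighter : Type := Base ⋊[shiftAction] Multiplicative ℤ


section Generic

variable {G : Type*} [Group G] {S : Set G}

lemma exists_word (hgen : Subgroup.closure S = ⊤) (g : G) :
    ∃ w : List G, (∀ x ∈ w, x ∈ S ∪ S⁻¹) ∧ w.prod = g := by
  have hg : g ∈ Subgroup.closure S := hgen ▸ Subgroup.mem_top g
  induction hg using Subgroup.closure_induction with
  | mem x hx => exact ⟨[x], by simp [hx], by simp⟩
  | one => exact ⟨[], by simp, by simp⟩
  | mul x y _ _ ihx ihy =>
    obtain ⟨w1, h1, e1⟩ := ihx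
    obtain ⟨w2, h2, e2⟩ := ihy
    refine ⟨w1 ++ w2, ?_, by simp [e1, e2]⟩
    intro a ha
    rcases List.mem_append.1 ha with h | h
    exacts [h1 a h, h2 a h]
  | inv x _ ihx =>
    obtain ⟨w, h1, e1⟩ := ihx
    refine ⟨(w.map (·⁻¹)).reverse, ?_, ?_⟩
    · intro a ha
      simp only [List.mem_reverse, List.mem_map] at ha
      obtain ⟨b, hb, rfl⟩ := ha
      rcases h1 b hb with h | h
      · exact Or.inr (by simpa using h)
      · exact Or.inl (by simpa using h)
    · rw [List.prod_reverse_noncomm, List.map_map]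
      simp [e1]

lemma wordDist_le {x y : G} {w : List G} (hw : ∀ g ∈ w, g ∈ S ∪ S⁻¹)
    (hp : w.prod = x⁻¹ * y) : wordDist S x y ≤ w.length :=
  Nat.sInf_le ⟨w, hw, hp, rfl⟩

lemma wordDist_exists (hgen : Subgroup.closure S = ⊤) (x y : G) :
    ∃ w : List G, (∀ g ∈ w, g ∈ S ∪ S⁻¹) ∧ w.prod = x⁻¹ * y ∧
      w.length = wordDist S x y := by
  have hne : {n | ∃ w : List G, (∀ g ∈ w, g ∈ S ∪ S⁻¹) ∧ w.prod = x⁻¹ * y ∧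
      w.length = n}.Nonempty := by
    obtain ⟨w, h1, h2⟩ := exists_word hgen (x⁻¹ * y)
    exact ⟨w.length, w, h1, h2, rfl⟩
  exact Nat.sInf_mem hne

lemma wordDist_one_mul (x y : G) : wordDist S x y = wordDist S 1 (x⁻¹ * y) := by
  simp [wordDist]

lemma wordDist_self (x : G) : wordDist S x x = 0 := by
  have := wordDist_le (S := S) (x := x) (y := x) (w := []) (by simp) (by simp)
  simpa using this

lemma dist1_mul_le (hgen : Subgroup.closure S = ⊤) (g h : G) :
    wordDist S 1 (g * h) ≤ wordDist S 1 g + wordDist S 1 h := by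
  obtain ⟨w1, hw1, hp1, hl1⟩ := wordDist_exists hgen 1 g
  obtain ⟨w2, hw2, hp2, hl2⟩ := wordDist_exists hgen 1 h
  have hmem : ∀ a ∈ w1 ++ w2, a ∈ S ∪ S⁻¹ := by
    intro a ha
    rcases List.mem_append.1 ha with h' | h'
    exacts [hw1 a h', hw2 a h']
  have hp : (w1 ++ w2).prod = (1:G)⁻¹ * (g * h) := by
    simp only [List.prod_append, hp1, hp2]; group
  have := wordDist_le (S := S) hmem hp
  simpa [hl1, hl2] using this

lemma dist1_le_one (hgen : Subgroup.closure S = ⊤) {s : G} (hs : s ∈ S ∪ S⁻¹) :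
    wordDist S 1 s ≤ 1 := by
  have hmem : ∀ g ∈ [s], g ∈ S ∪ S⁻¹ := by
    intro g hg; rw [List.mem_singleton] at hg; subst hg; exact hs
  simpa using wordDist_le (S := S) (x := 1) (y := s) hmem (by simp)

lemma dist1_prod_le (hgen : Subgroup.closure S = ⊤) (w : List G) :
    wordDist S 1 w.prod ≤ (w.map (fun g => wordDist S 1 g)).sum := by
  induction w with
  | nil => simp [wordDist_self]
  | cons a l ih =>
    simp only [List.prod_cons, List.map_cons, List.sum_cons]
    exact le_trans (dist1_mul_le hgen a l.prod) (by omega)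

/-- comparison of word metrics -/
lemma wordDist_comparison (hgen : Subgroup.closure S = ⊤) {T : Set G}
    (hgenT : Subgroup.closure T = ⊤) {lam : ℕ}
    (hlam : ∀ s ∈ T ∪ T⁻¹, wordDist S 1 s ≤ lam) (x y : G) :
    wordDist S x y ≤ lam * wordDist T x y := by
  obtain ⟨w, hw, hp, hl⟩ := wordDist_exists hgenT x y
  rw [wordDist_one_mul, ← hp, ← hl]
  calc wordDist S 1 w.prod ≤ (w.map (fun g => wordDist S 1 g)).sum := dist1_prod_le hgen w
    _ ≤ (w.map (fun _ => lam)).sum := by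
        apply List.sum_le_sum
        intro a ha
        exact hlam a (hw a ha)
    _ = lam * w.length := by simp [List.map_const', mul_comm]

end Generic

open SemidirectProduct Finsupp Multiplicative

section Lamp

noncomputable def gent : Lamplighter := inr (ofAdd 1)
noncomputable def gena : Lamplighter := inl (ofAdd (Finsupp.single (0:ℤ) (1 : ZMod 2)))
noncomputable def S0 : Set Lamplighter := {gena, gent}

lemma shift_toAdd_apply (m : Multiplicative ℤ) (x : Base) (q : ℤ) :
    ((shiftAction m x).toAdd) q = x.toAdd (q - m.toAdd) := by
  show (Finsupp.equivMapDomain (Equiv.addRight m.toAdd) x.toAdd) q = _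
  rw [Finsupp.equivMapDomain_apply]
  rfl

lemma shift_single (m p : ℤ) (b : ZMod 2) :
    shiftAction (ofAdd m) (ofAdd (Finsupp.single p b)) = ofAdd (Finsupp.single (p + m) b) := by
  show Multiplicative.ofAdd (Finsupp.equivMapDomain (Equiv.addRight m) (Finsupp.single p b)) = _
  rw [Finsupp.equivMapDomain_single]
  rfl

lemma base_inv (x : Base) : x⁻¹ = x := by
  have h0 : x.toAdd + x.toAdd = 0 := by
    ext q
    show x.toAdd q + x.toAdd q = 0
    exact CharTwo.add_self_eq_zero _
  have hx : x * x = 1 := by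
    apply Multiplicative.toAdd.injective
    simpa using h0
  exact inv_eq_of_mul_eq_one_right hx

lemma gena_inv : gena⁻¹ = gena := by
  rw [gena, ← map_inv, base_inv]

lemma gent_zpow (p : ℤ) : gent ^ p = inr (ofAdd p) := by
  rw [gent, ← map_zpow]
  congr 1
  show Multiplicative.ofAdd (p • (1:ℤ)) = _
  congr 1
  simp

lemma lamp_eq (p : ℤ) :
    (inl (ofAdd (Finsupp.single p (1 : ZMod 2))) : Lamplighter) =
      gent ^ p * gena * gent ^ (-p) := by
  rw [gent_zpow, gent_zpow, gena]
  have := SemidirectProduct.inl_aut (φ := shiftAction) (ofAdd p)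
    (ofAdd (Finsupp.single (0:ℤ) (1 : ZMod 2)))
  rw [shift_single, zero_add] at this
  rw [this]
  rfl

lemma S0_gen : Subgroup.closure S0 = ⊤ := by
  rw [eq_top_iff]
  intro x _
  have hx : x = inl x.left * inr x.right := (inl_left_mul_inr_right x).symm
  rw [hx]
  have ht : gent ∈ Subgroup.closure S0 := Subgroup.subset_closure (by simp [S0])
  have ha : gena ∈ Subgroup.closure S0 := Subgroup.subset_closure (by simp [S0])
  have hinr : ∀ m : ℤ, (inr (φ := shiftAction) (ofAdd m)) ∈ Subgroup.closure S0 := by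
    intro m
    rw [← gent_zpow]
    exact zpow_mem ht m
  have hinl : ∀ f : ℤ →₀ ZMod 2,
      (inl (φ := shiftAction) (ofAdd f)) ∈ Subgroup.closure S0 := by
    intro f
    induction f using Finsupp.induction with
    | zero =>
      rw [ofAdd_zero, map_one]
      exact one_mem _
    | single_add p b f hp hb ih =>
      rw [ofAdd_add, map_mul]
      refine mul_mem ?_ ih
      have hb1 : b = 1 := by revert hb; revert b; decide
      rw [hb1, lamp_eq]
      exact mul_mem (mul_mem (zpow_mem ht p) ha) (zpow_mem ht (-p))
  have h1 : (inl (φ := shiftAction) x.left) ∈ Subgroup.closure S0 := by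
    have := hinl x.left.toAdd
    simpa using this
  have h2 : (inr (φ := shiftAction) x.right) ∈ Subgroup.closure S0 := by
    have := hinr x.right.toAdd
    simpa using this
  exact mul_mem h1 h2

end Lamp

open SemidirectProduct Finsupp Multiplicative

lemma gena_mem : gena ∈ S0 ∪ S0⁻¹ := Or.inl (by simp [S0])
lemma gent_mem : gent ∈ S0 ∪ S0⁻¹ := Or.inl (by simp [S0])
lemma gent_inv_mem : gent⁻¹ ∈ S0 ∪ S0⁻¹ := Or.inr (by simp [S0])

lemma dist1_gent_zpow (p : ℤ) : wordDist S0 1 (gent ^ p) ≤ p.natAbs := by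
  rcases le_or_gt 0 p with hp | hp
  · have : (List.replicate p.natAbs gent).prod = (1:Lamplighter)⁻¹ * gent ^ p := by
      rw [List.prod_replicate, inv_one, one_mul]
      rw [← zpow_natCast]
      congr 1
      omega
    have hle := wordDist_le (S := S0) (fun g hg => by
      rw [List.eq_of_mem_replicate hg]; exact gent_mem) this
    simpa using hle
  · have : (List.replicate p.natAbs gent⁻¹).prod = (1:Lamplighter)⁻¹ * gent ^ p := by
      rw [List.prod_replicate, inv_one, one_mul, inv_pow, ← zpow_natCast, ← zpow_neg]
      congr 1
      omega
    have hle := wordDist_le (S := S0) (fun g hg => by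
      rw [List.eq_of_mem_replicate hg]; exact gent_inv_mem) this
    simpa using hle

lemma dist1_gena : wordDist S0 1 gena ≤ 1 := dist1_le_one S0_gen gena_mem

lemma dist1_lamp (p : ℤ) :
    wordDist S0 1 (inl (ofAdd (Finsupp.single p (1 : ZMod 2))) : Lamplighter) ≤
      2 * p.natAbs + 1 := by
  rw [lamp_eq]
  calc wordDist S0 1 (gent ^ p * gena * gent ^ (-p))
      ≤ wordDist S0 1 (gent ^ p * gena) + wordDist S0 1 (gent ^ (-p)) :=
        dist1_mul_le S0_gen _ _
    _ ≤ wordDist S0 1 (gent ^ p) + wordDist S0 1 gena + wordDist S0 1 (gent ^ (-p)) := by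
        have := dist1_mul_le S0_gen (gent ^ p) gena
        omega
    _ ≤ p.natAbs + 1 + p.natAbs := by
        have h1 := dist1_gent_zpow p
        have h2 := dist1_gent_zpow (-p)
        have h3 := dist1_gena
        have : (-p).natAbs = p.natAbs := Int.natAbs_neg p
        omega
    _ ≤ 2 * p.natAbs + 1 := by omega

lemma dist1_inl_le (f : ℤ →₀ ZMod 2) (M : ℕ) (h : ∀ q, f q ≠ 0 → q.natAbs ≤ M) :
    wordDist S0 1 (inl (ofAdd f) : Lamplighter) ≤ f.support.card * (2 * M + 1) := by
  induction f using Finsupp.induction with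
  | zero =>
    rw [ofAdd_zero, map_one]
    simp [wordDist_self]
  | single_add p b f hp hb ih =>
    have hb1 : b = 1 := by
      have hdec : ∀ c : ZMod 2, c ≠ 0 → c = 1 := by decide
      exact hdec b hb
    have hfp : f p = 0 := Finsupp.notMem_support_iff.1 hp
    have hMp : p.natAbs ≤ M := by
      apply h
      rw [Finsupp.add_apply, Finsupp.single_eq_same, hfp, add_zero]
      exact hb
    have hMf : ∀ q, f q ≠ 0 → q.natAbs ≤ M := by
      intro q hq
      have hqp : q ≠ p := by rintro rfl; exact hq hfp
      apply h
      rw [Finsupp.add_apply, Finsupp.single_eq_of_ne' (Ne.symm hqp), zero_add]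
      exact hq
    have hcard : (Finsupp.single p b + f).support.card = f.support.card + 1 := by
      rw [Finsupp.support_add_eq, Finsupp.support_single_ne_zero p hb]
      · rw [Finset.card_union_of_disjoint (by simpa using hp)]
        simp [add_comm]
      · rw [Finsupp.support_single_ne_zero p hb]
        simpa using hp
    rw [ofAdd_add, map_mul, hcard]
    calc wordDist S0 1 (inl (ofAdd (Finsupp.single p b)) * inl (ofAdd f) : Lamplighter)
        ≤ wordDist S0 1 (inl (ofAdd (Finsupp.single p b)) : Lamplighter) +
          wordDist S0 1 (inl (ofAdd f) : Lamplighter) := dist1_mul_le S0_gen _ _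
      _ ≤ (2 * p.natAbs + 1) + f.support.card * (2 * M + 1) := by
          have := dist1_lamp p
          rw [hb1] at *
          have := ih hMf
          omega
      _ ≤ (f.support.card + 1) * (2 * M + 1) := by
          have : 2 * p.natAbs + 1 ≤ 2 * M + 1 := by omega
          nlinarith

lemma support_card_le (f : ℤ →₀ ZMod 2) (M : ℕ) (h : ∀ q, f q ≠ 0 → q.natAbs ≤ M) :
    f.support.card ≤ 2 * M + 1 := by
  have hsub : f.support ⊆ Finset.Icc (-(M:ℤ)) M := by
    intro q hq
    have := h q (Finsupp.mem_support_iff.1 hq)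
    rw [Finset.mem_Icc]
    omega
  calc f.support.card ≤ (Finset.Icc (-(M:ℤ)) M).card := Finset.card_le_card hsub
    _ = 2 * M + 1 := by
        rw [Int.card_Icc]
        omega

lemma dist1_elem_le (f : ℤ →₀ ZMod 2) (k : ℤ) (M : ℕ)
    (hs : ∀ q, f q ≠ 0 → q.natAbs ≤ M) (hk : k.natAbs ≤ M) :
    wordDist S0 1 (inl (ofAdd f) * inr (ofAdd k) : Lamplighter) ≤
      (2 * M + 1) * (2 * M + 1) + M := by
  have h1 : wordDist S0 1 (inl (ofAdd f) : Lamplighter) ≤ (2 * M + 1) * (2 * M + 1) := by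
    calc wordDist S0 1 (inl (ofAdd f) : Lamplighter) ≤ f.support.card * (2 * M + 1) :=
        dist1_inl_le f M hs
      _ ≤ (2 * M + 1) * (2 * M + 1) :=
        Nat.mul_le_mul_right _ (support_card_le f M hs)
  have h2 : wordDist S0 1 (inr (ofAdd k) : Lamplighter) ≤ M := by
    rw [← gent_zpow]
    exact le_trans (dist1_gent_zpow k) hk
  have := dist1_mul_le S0_gen (inl (ofAdd f) : Lamplighter) (inr (ofAdd k))
  omega

open SemidirectProduct Finsupp Multiplicative

lemma mul_right_toAdd (x y : Lamplighter) :
    (x * y).right.toAdd = x.right.toAdd + y.right.toAdd := rfl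

lemma mul_left_toAdd_apply (x y : Lamplighter) (q : ℤ) :
    (x * y).left.toAdd q = x.left.toAdd q + y.left.toAdd (q - x.right.toAdd) := by
  rw [SemidirectProduct.mul_left]
  rw [show ((x.left * (shiftAction x.right) y.left).toAdd) =
    x.left.toAdd + ((shiftAction x.right) y.left).toAdd from rfl]
  rw [Finsupp.add_apply, shift_toAdd_apply]

lemma memS0_cases {g : Lamplighter} (hg : g ∈ S0 ∪ S0⁻¹) :
    g = gena ∨ g = gent ∨ g = gent⁻¹ := by
  rcases hg with hg | hg
  · rcases hg with hg | hg
    · exact Or.inl hg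
    · exact Or.inr (Or.inl hg)
  · rw [Set.mem_inv] at hg
    rcases hg with hg | hg
    · left
      rw [← gena_inv, ← hg, inv_inv]
    · right; right
      rw [← hg, inv_inv]

lemma gena_left_toAdd (q : ℤ) :
    gena.left.toAdd q = Finsupp.single (0:ℤ) (1 : ZMod 2) q := rfl
lemma gena_right_toAdd : gena.right.toAdd = 0 := rfl
lemma gent_left_toAdd (q : ℤ) : gent.left.toAdd q = 0 := rfl
lemma gent_right_toAdd : gent.right.toAdd = 1 := rfl
lemma gent_inv_left_toAdd (q : ℤ) : gent⁻¹.left.toAdd q = 0 := by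
  rw [show gent⁻¹ = inr (ofAdd (-1:ℤ)) from by rw [← gent_zpow]; group]
  rfl
lemma gent_inv_right_toAdd : gent⁻¹.right.toAdd = -1 := rfl

lemma word_struct (w : List Lamplighter) (hw : ∀ g ∈ w, g ∈ S0 ∪ S0⁻¹) :
    (∀ q : ℤ, w.prod.left.toAdd q ≠ 0 → q.natAbs ≤ w.length) ∧
      w.prod.right.toAdd.natAbs ≤ w.length := by
  induction w with
  | nil => simp [show ((1:Lamplighter).left.toAdd) = 0 from rfl,
      show ((1:Lamplighter).right.toAdd) = 0 from rfl]
  | cons s l ih =>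
    obtain ⟨ihL, ihR⟩ := ih (fun g hg => hw g (List.mem_cons_of_mem s hg))
    have hs := memS0_cases (hw s (List.mem_cons_self))
    rw [List.prod_cons]
    constructor
    · intro q hq
      rw [mul_left_toAdd_apply] at hq
      rcases hs with rfl | rfl | rfl
      · rw [gena_right_toAdd, sub_zero] at hq
        rcases ne_or_eq (l.prod.left.toAdd q) 0 with h0 | h0
        · have := ihL q h0
          simp only [List.length_cons]
          omega
        · rw [h0, add_zero, gena_left_toAdd] at hq
          have : q = 0 := by
            by_contra hne
            rw [Finsupp.single_eq_of_ne' (Ne.symm hne)] at hq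
            exact hq rfl
          simp [this]
      · rw [gent_left_toAdd, zero_add, gent_right_toAdd] at hq
        have := ihL _ hq
        simp only [List.length_cons]
        omega
      · rw [gent_inv_left_toAdd, zero_add, gent_inv_right_toAdd] at hq
        have := ihL _ hq
        simp only [List.length_cons]
        omega
    · rw [mul_right_toAdd]
      rcases hs with rfl | rfl | rfl
      · rw [gena_right_toAdd]
        simp only [List.length_cons]
        omega
      · rw [gent_right_toAdd]
        simp only [List.length_cons]
        omega
      · rw [gent_inv_right_toAdd]
        simp only [List.length_cons]
        omega

lemma close_structure {x y : Lamplighter} {r : ℕ} (h : wordDist S0 x y ≤ r) :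
    (y.right.toAdd - x.right.toAdd).natAbs ≤ r ∧
    ∀ q : ℤ, r < (q - x.right.toAdd).natAbs → y.left.toAdd q = x.left.toAdd q := by
  obtain ⟨w, hw, hp, hl⟩ := wordDist_exists S0_gen x y
  have hlen : w.length ≤ r := by omega
  obtain ⟨hL, hR⟩ := word_struct w hw
  have hy : y = x * w.prod := by rw [hp]; group
  constructor
  · have : y.right.toAdd = x.right.toAdd + w.prod.right.toAdd := by
      rw [hy, mul_right_toAdd]
    rw [this]
    have := hR
    omega
  · intro q hq
    have hz : w.prod.left.toAdd (q - x.right.toAdd) = 0 := by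
      by_contra h0
      have := hL _ h0
      omega
    rw [hy, mul_left_toAdd_apply, hz, add_zero]

open SemidirectProduct Finsupp Multiplicative

lemma base_mul_toAdd_apply (u v : Base) (q : ℤ) :
    (u * v).toAdd q = u.toAdd q + v.toAdd q := rfl
lemma base_inv_toAdd_apply (u : Base) (q : ℤ) :
    (u⁻¹).toAdd q = -(u.toAdd q) := rfl
lemma mul_inv_right_toAdd (u v : Multiplicative ℤ) :
    (u⁻¹ * v).toAdd = -u.toAdd + v.toAdd := rfl

lemma inv_mul_decomp (x y : Lamplighter) :
    x⁻¹ * y = inl (shiftAction x.right⁻¹ (x.left⁻¹ * y.left)) *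
      inr (x.right⁻¹ * y.right) := by
  ext
  · simp [SemidirectProduct.mul_left, SemidirectProduct.inv_left,
      SemidirectProduct.inv_right, map_mul]
  · simp [SemidirectProduct.mul_right, SemidirectProduct.inv_right]

lemma main_cover (d : ℕ) (hd : 0 < d) :
    ∃ (ι : Type) (B : ι → Set Lamplighter) (D : ℕ),
      (∀ x, ∃ i, x ∈ B i) ∧
      (∀ i, ∀ x ∈ B i, ∀ y ∈ B i, wordDist S0 x y ≤ D) ∧
      (∀ x, ∃ t : Finset ι, t.card ≤ 2 ∧
        ∀ i, (∃ y ∈ B i, wordDist S0 x y ≤ d) → i ∈ t) := by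
  classical
  set L : ℤ := 10 * d with hLdef
  have hL0 : 0 < L := by simp only [hLdef]; omega
  refine ⟨ℤ × (ℤ →₀ ZMod 2),
    fun i => {x : Lamplighter |
      (i.1 * L ≤ x.right.toAdd ∧ x.right.toAdd ≤ (i.1 + 1) * L - 1) ∧
      (∀ p : ℤ, ¬(i.1 * L - 3 * d ≤ p ∧ p ≤ (i.1 + 1) * L - 1 + 3 * d) →
        x.left.toAdd p = i.2 p) ∧
      (∀ p : ℤ, (i.1 * L - 3 * d ≤ p ∧ p ≤ (i.1 + 1) * L - 1 + 3 * d) →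
        i.2 p = 0)},
    (2 * (13 * d) + 1) * (2 * (13 * d) + 1) + 13 * d, ?_, ?_, ?_⟩
  · -- covering
    intro x
    set n := x.right.toAdd with hn
    set k := n / L with hk
    refine ⟨(k, x.left.toAdd.filter
      (fun p => ¬(k * L - 3 * d ≤ p ∧ p ≤ (k + 1) * L - 1 + 3 * d))), ?_, ?_, ?_⟩
    · constructor
      · show k * L ≤ n
        have h := Int.ediv_mul_le n (ne_of_gt hL0)
        rw [← hk] at h
        exact h
      · show n ≤ (k + 1) * L - 1
        have h := Int.lt_ediv_add_one_mul_self n hL0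
        rw [← hk] at h
        omega
    · intro p hp
      rw [Finsupp.filter_apply, if_pos hp]
    · intro p hp
      rw [Finsupp.filter_apply, if_neg (by tauto)]
  · -- diameter
    rintro ⟨k, c⟩ y hy y' hy'
    simp only [Set.mem_setOf_eq] at hy hy'
    obtain ⟨⟨hm1, hm2⟩, hout, hnorm⟩ := hy
    obtain ⟨⟨hm1', hm2'⟩, hout', hnorm'⟩ := hy'
    rw [wordDist_one_mul, inv_mul_decomp]
    rw [show inl (shiftAction y.right⁻¹ (y.left⁻¹ * y'.left)) *
        inr (y.right⁻¹ * y'.right) =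
        (inl (ofAdd ((shiftAction y.right⁻¹ (y.left⁻¹ * y'.left)).toAdd)) *
         inr (ofAdd ((y.right⁻¹ * y'.right).toAdd)) : Lamplighter) from by
      rw [ofAdd_toAdd, ofAdd_toAdd]]
    apply dist1_elem_le
    · intro q hq
      rw [shift_toAdd_apply] at hq
      have hpt : (y.left⁻¹ * y'.left).toAdd (q - (y.right⁻¹).toAdd) =
          -(y.left.toAdd (q + y.right.toAdd)) + y'.left.toAdd (q + y.right.toAdd) := by
        rw [base_mul_toAdd_apply, base_inv_toAdd_apply]
        congr 2 <;>
        · rw [show ((y.right⁻¹).toAdd) = -y.right.toAdd from rfl]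
          ring_nf
      rw [hpt] at hq
      set p := q + y.right.toAdd with hp
      have hinJ : k * L - 3 * d ≤ p ∧ p ≤ (k + 1) * L - 1 + 3 * d := by
        by_contra hc
        rw [hout p hc, hout' p hc] at hq
        exact hq (neg_add_cancel _)
      have e1 : (k + 1) * L = k * L + L := by ring
      omega
    · rw [mul_inv_right_toAdd]
      have e1 : (k + 1) * L = k * L + L := by ring
      omega
  · -- multiplicity
    intro x
    set n := x.right.toAdd with hn
    set K := (n + d) / L with hK
    set cE : ℤ → (ℤ →₀ ZMod 2) := fun k => x.left.toAdd.filter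
      (fun p => ¬(k * L - 3 * d ≤ p ∧ p ≤ (k + 1) * L - 1 + 3 * d)) with hcE
    refine ⟨{(K - 1, cE (K - 1)), (K, cE K)}, ?_, ?_⟩
    · exact le_trans (Finset.card_insert_le _ _) (by simp)
    · rintro ⟨k, c⟩ ⟨y, hyB, hyd⟩
      simp only [Set.mem_setOf_eq] at hyB
      obtain ⟨⟨hm1, hm2⟩, hout, hnorm⟩ := hyB
      obtain ⟨hR, hLamp⟩ := close_structure hyd
      set m := y.right.toAdd with hm
      have e1 : (k + 1) * L = k * L + L := by ring
      have hk1 : k ≤ K := by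
        rw [hK, Int.le_ediv_iff_mul_le hL0]
        omega
      have hk2 : K ≤ k + 1 := by
        have : K < k + 2 := by
          rw [hK, Int.ediv_lt_iff_lt_mul hL0]
          have e2 : (k + 2) * L = k * L + L + L := by ring
          omega
        omega
      have hc : c = cE k := by
        ext q
        by_cases hqJ : k * L - 3 * d ≤ q ∧ q ≤ (k + 1) * L - 1 + 3 * d
        · rw [hnorm q hqJ, hcE]
          simp only [Finsupp.filter_apply]
          rw [if_neg (by tauto)]
        · rw [← hout q hqJ, hcE]
          simp only [Finsupp.filter_apply]
          rw [if_pos hqJ]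
          apply hLamp
          omega
      have hkk : k = K - 1 ∨ k = K := by omega
      rcases hkk with rfl | rfl
      · rw [hc]
        exact Finset.mem_insert_self _ _
      · rw [hc]
        exact Finset.mem_insert_of_mem (Finset.mem_singleton_self _)

open SemidirectProduct Finsupp Multiplicative

section BallFinite
variable {G : Type*} [Group G] {S : Set G}

lemma prods_finite (hS : S.Finite) :
    ∀ D : ℕ, {g : G | ∃ w : List G, (∀ x ∈ w, x ∈ S ∪ S⁻¹) ∧
      w.length ≤ D ∧ w.prod = g}.Finite := by
  have hSf : (S ∪ S⁻¹).Finite := hS.union hS.inv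
  intro D
  induction D with
  | zero =>
    apply Set.Finite.subset (Set.finite_singleton (1:G))
    rintro g ⟨w, _, hlen, hprod⟩
    rw [Nat.le_zero] at hlen
    rw [List.eq_nil_of_length_eq_zero hlen] at hprod
    simp [← hprod]
  | succ D ih =>
    apply Set.Finite.subset (Set.Finite.union ih
      (Set.Finite.biUnion hSf (fun s _ =>
        ih.image (fun g => g * s))))
    rintro g ⟨w, hw, hlen, hprod⟩
    rcases eq_or_ne w [] with rfl | hne
    · left
      exact ⟨[], by simp, by simp, hprod⟩
    · right
      have hconcat : w = w.dropLast ++ [w.getLast hne] := (List.dropLast_append_getLast hne).symm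
      refine Set.mem_biUnion (hw _ (List.getLast_mem hne)) ?_
      refine ⟨w.dropLast.prod, ⟨w.dropLast, ?_, ?_, rfl⟩, ?_⟩
      · intro x hx
        exact hw x (List.dropLast_subset w hx)
      · have := List.length_dropLast (xs := w)
        have hwl : w.length ≥ 1 := List.length_pos_iff.2 hne
        omega
      · show w.dropLast.prod * w.getLast hne = g
        rw [← hprod]
        conv_rhs => rw [hconcat]
        rw [List.prod_append, List.prod_singleton]

lemma ball_finite (hS : S.Finite) (hgen : Subgroup.closure S = ⊤) (D : ℕ) :
    {g : G | wordDist S 1 g ≤ D}.Finite := by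
  apply Set.Finite.subset (prods_finite hS D)
  intro g hg
  simp only [Set.mem_setOf_eq] at hg
  obtain ⟨w, hw, hp, hl⟩ := wordDist_exists hgen 1 g
  exact ⟨w, hw, by omega, by simpa using hp⟩

end BallFinite

instance : Infinite Lamplighter :=
  Infinite.of_injective (inr : Multiplicative ℤ → Lamplighter) inr_injective

theorem lamplighter_asdim_one' :
    (∃ S : Set Lamplighter, S.Finite ∧ Subgroup.closure S = ⊤) ∧
      ∀ S : Set Lamplighter, S.Finite → Subgroup.closure S = ⊤ →
        AsdimLE S 1 ∧ ¬ AsdimLE S 0 := by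
  have hS0fin : S0.Finite := (Set.finite_singleton gent).insert gena
  refine ⟨⟨S0, hS0fin, S0_gen⟩, ?_⟩
  intro S hS hgen
  constructor
  · -- upper bound
    intro d hd
    have hSf : (S ∪ S⁻¹).Finite := hS.union hS.inv
    set lam1 := hSf.toFinset.sup (fun s => wordDist S0 1 s) with hlam1def
    have hlam1 : ∀ s ∈ S ∪ S⁻¹, wordDist S0 1 s ≤ lam1 :=
      fun s hs => Finset.le_sup (hSf.mem_toFinset.2 hs)
    have hS0f : (S0 ∪ S0⁻¹).Finite := hS0fin.union hS0fin.inv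
    set lam2 := hS0f.toFinset.sup (fun s => wordDist S 1 s) with hlam2def
    have hlam2 : ∀ s ∈ S0 ∪ S0⁻¹, wordDist S 1 s ≤ lam2 :=
      fun s hs => Finset.le_sup (hS0f.mem_toFinset.2 hs)
    obtain ⟨ι, B, D, hcov, hdiam, hmult⟩ := main_cover (lam1 * d + 1) (by omega)
    refine ⟨ι, B, lam2 * D, hcov, ?_, ?_⟩
    · intro i x hx y hy
      calc wordDist S x y ≤ lam2 * wordDist S0 x y :=
            wordDist_comparison hgen S0_gen hlam2 x y
        _ ≤ lam2 * D := Nat.mul_le_mul_left _ (hdiam i x hx y hy)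
    · intro x
      obtain ⟨t, htc, ht⟩ := hmult x
      refine ⟨t, htc, ?_⟩
      rintro i ⟨y, hyB, hyd⟩
      refine ht i ⟨y, hyB, ?_⟩
      calc wordDist S0 x y ≤ lam1 * wordDist S x y :=
            wordDist_comparison S0_gen hgen hlam1 x y
        _ ≤ lam1 * d := Nat.mul_le_mul_left _ hyd
        _ ≤ lam1 * d + 1 := by omega
  · -- lower bound
    intro hA
    obtain ⟨ι, B, D, hcov, hdiam, hmult⟩ := hA 1 one_pos
    have huniq : ∀ x : Lamplighter, ∀ i j, x ∈ B i →
        (∃ y ∈ B j, wordDist S x y ≤ 1) → i = j := by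
      intro x i j hxi hj
      obtain ⟨t, htc, ht⟩ := hmult x
      have hi : i ∈ t := ht i ⟨x, hxi, by rw [wordDist_self]; omega⟩
      have hjt : j ∈ t := ht j hj
      have := Finset.card_le_one.1 (by omega : t.card ≤ 1)
      exact this i hi j hjt
    obtain ⟨i0, hi0⟩ := hcov 1
    have hall : ∀ g : Lamplighter, g ∈ B i0 := by
      intro g
      obtain ⟨w, hw, hprod⟩ := exists_word hgen g
      rw [← hprod]
      clear hprod
      induction w using List.reverseRecOn with
      | nil =>
        simpa using hi0
      | append_singleton l s ihl =>
        have hl : l.prod ∈ B i0 := ihl (fun g hg => hw g (by simp [hg]))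
        obtain ⟨j, hj⟩ := hcov (l ++ [s]).prod
        have hs : s ∈ S ∪ S⁻¹ := hw s (by simp)
        have hsinv : s⁻¹ ∈ S ∪ S⁻¹ := by
          rcases hs with h | h
          · exact Or.inr (Set.inv_mem_inv.2 h)
          · exact Or.inl (by simpa using Set.inv_mem_inv.2 h)
        have hdist : wordDist S (l ++ [s]).prod l.prod ≤ 1 := by
          rw [wordDist_one_mul]
          have : ((l ++ [s]).prod)⁻¹ * l.prod = s⁻¹ := by
            rw [List.prod_append, List.prod_singleton]
            group
          rw [this]
          exact dist1_le_one hgen hsinv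
        have := huniq (l ++ [s]).prod j i0 hj ⟨l.prod, hl, hdist⟩
        rwa [← this]
    have hbound : ∀ g : Lamplighter, wordDist S 1 g ≤ D :=
      fun g => hdiam i0 1 (hall 1) g (hall g)
    have hfin : (Set.univ : Set Lamplighter).Finite := by
      apply Set.Finite.subset (ball_finite hS hgen D)
      intro g _
      exact hbound g
    exact Set.infinite_univ hfin


/-- The lamplighter group is finitely generated and has asymptotic dimension
exactly `1` (with respect to any word metric coming from a finite generating
set). -/
theorem lamplighter_asdim_one :
    (∃ S : Set Lamplighter, S.Finite ∧ Subgroup.closure S = ⊤) ∧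
      ∀ S : Set Lamplighter, S.Finite → Subgroup.closure S = ⊤ →
        AsdimLE S 1 ∧ ¬ AsdimLE S 0 :=
  lamplighter_asdim_one'
end
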